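/- Let σ map a binary sequence (uₙ) to the sequence of partial sums mod 2, (∑_{j<n} uⱼ mod 2)ₙ. Then σ applied to the period-doubling sequence (the fixed point of 1↦10, 0↦11) equals the Thue–Morse sequence. -/
import Mathlib

theorem sigma_periodDoubling_eq_thueMorse (p : ℕ → ℕ)
    (hp0 : ∀ n, p (2 * n) = 1) (hp1 : ∀ n, p (2 * n + 1) = 1 - p n) :
    ∀ n, (∑ j ∈ Finset.range n, p j) % 2 = (Nat.digits 2 n).sum % 2 := by
  have hle : ∀ n, p n ≤ 1 := by
    intro n
    rcases Nat.even_or_odd n with ⟨m, hm⟩ | ⟨m, hm⟩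
    · rw [hm, ← two_mul, hp0]
    · rw [hm, hp1]; exact Nat.sub_le _ _
  have hS : ∀ m, (∑ j ∈ Finset.range (2 * m), p j) + (∑ j ∈ Finset.range m, p j)
      = 2 * m := by
    intro m
    induction m with
    | zero => simp
    | succ m ih =>
      have h2 : 2 * (m + 1) = 2 * m + 1 + 1 := by ring
      rw [h2, Finset.sum_range_succ, Finset.sum_range_succ, Finset.sum_range_succ,
        hp0, hp1]
      have := hle m
      omega
  intro n
  induction n using Nat.strong_induction_on with
  | _ n ih =>
    match n with
    | 0 => simp
    | (m + 1) =>
      have hd : Nat.digits 2 (m + 1) = (m + 1) % 2 :: Nat.digits 2 ((m + 1) / 2) :=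
        Nat.digits_def' (by norm_num) (by omega)
      rcases Nat.even_or_odd (m + 1) with ⟨k, hk⟩ | ⟨k, hk⟩
      · have hk' : k < m + 1 := by omega
        have hs := hS k
        have hih := ih k hk'
        have hA : (∑ j ∈ Finset.range (m + 1), p j) = ∑ j ∈ Finset.range (2 * k), p j := by
          rw [show 2 * k = m + 1 by omega]
        have h0 : (m + 1) % 2 = 0 := by omega
        have hdiv : (m + 1) / 2 = k := by omega
        rw [hd, h0, hdiv, List.sum_cons]
        omega
      · have hk' : k < m + 1 := by omega
        have hs := hS k
        have hih := ih k hk'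
        have hA : (∑ j ∈ Finset.range (m + 1), p j)
            = (∑ j ∈ Finset.range (2 * k), p j) + p (2 * k) := by
          rw [show m + 1 = 2 * k + 1 by omega, Finset.sum_range_succ]
        have h1 : (m + 1) % 2 = 1 := by omega
        have hdiv : (m + 1) / 2 = k := by omega
        rw [hd, h1, hdiv, List.sum_cons, hA, hp0]
        omega
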